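/- arXiv:1604.01872 — 4 statements merged into one kernel-verified Lean document; each statement's English description precedes it below -/
import Mathlib

section
/- Let A₁,…,Aₘ be linearly independent n×n complex matrices and let Ω_A be the open unit ball of the norm ‖(z₁,…,zₘ)‖_A = ‖z₁A₁+⋯+zₘAₘ‖_op on ℂᵐ. Fix w ∈ Ω_A and p×q complex matrices V₁,…,Vₘ. For a holomorphic function f : Ω_A → ℂ let ρ_V(f) denote the (p+q)×(p+q) block matrix [[f(w)·I_p, Σᵢ₌₁ᵐ (∂ᵢf(w))·Vᵢ],[0, f(w)·I_q]]. Then ‖ρ_V(f)‖_op ≤ 1 for every holomorphic f : Ω_A → ℂ with sup_{z∈Ω_A}|f(z)| ≤ 1 if and only if ‖ρ_V(g)‖_op ≤ 1 for every holomorphic g : Ω_A → ℂ with sup_{z∈Ω_A}|g(z)| ≤ 1 and g(w) = 0. -/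
open scoped Matrix.Norms.L2Operator
open Matrix

private lemma elim_normsq (p q : ℕ) (f : Fin p → ℂ) (g : Fin q → ℂ) :
    ‖(WithLp.equiv 2 ((Fin p ⊕ Fin q) → ℂ)).symm (Sum.elim f g)‖^2
      = ‖(WithLp.equiv 2 (Fin p → ℂ)).symm f‖^2 + ‖(WithLp.equiv 2 (Fin q → ℂ)).symm g‖^2 := by
  simp only [EuclideanSpace.norm_eq]
  rw [Real.sq_sqrt (by positivity), Real.sq_sqrt (by positivity), Real.sq_sqrt (by positivity),
    Fintype.sum_sum_type]
  simp

set_option maxHeartbeats 1000000 in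
private lemma block_B_norm_le (p q : ℕ) (B : Matrix (Fin p) (Fin q) ℂ) :
    ‖B‖ ≤ ‖Matrix.fromBlocks (0 : Matrix (Fin p) (Fin p) ℂ) B
      (0 : Matrix (Fin q) (Fin p) ℂ) (0 : Matrix (Fin q) (Fin q) ℂ)‖ := by
  set M := Matrix.fromBlocks (0 : Matrix (Fin p) (Fin p) ℂ) B
      (0 : Matrix (Fin q) (Fin p) ℂ) (0 : Matrix (Fin q) (Fin q) ℂ) with hM
  rw [Matrix.l2_opNorm_def]
  refine ContinuousLinearMap.opNorm_le_bound _ (norm_nonneg M) fun v => ?_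
  set x : EuclideanSpace ℂ (Fin p ⊕ Fin q) :=
    (WithLp.equiv 2 _).symm (Sum.elim (0 : Fin p → ℂ) (WithLp.equiv 2 _ v)) with hx
  have h1 : ‖x‖^2 = ‖v‖^2 := by
    rw [hx, elim_normsq]; simp
  have h2 : (Matrix.toEuclideanLin.trans LinearMap.toContinuousLinearMap M) x
      = (WithLp.equiv 2 _).symm (Sum.elim (B *ᵥ (WithLp.equiv 2 _ v)) (0 : Fin q → ℂ)) := by
    show Matrix.toEuclideanLin M x = _
    rw [hx, WithLp.equiv_symm_apply, Matrix.toEuclideanLin_apply_piLp_toLp, hM, Matrix.fromBlocks_mulVec]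
    simp
  have h3 : ‖(Matrix.toEuclideanLin.trans LinearMap.toContinuousLinearMap M) x‖^2
      = ‖(Matrix.toEuclideanLin.trans LinearMap.toContinuousLinearMap B) v‖^2 := by
    rw [h2, elim_normsq]
    simp [Matrix.toEuclideanLin_apply]
  have h4 := (Matrix.toEuclideanLin.trans LinearMap.toContinuousLinearMap M).le_opNorm x
  have hxv : ‖x‖ = ‖v‖ := by
    nlinarith [norm_nonneg x, norm_nonneg v]
  have hTv : ‖(Matrix.toEuclideanLin.trans LinearMap.toContinuousLinearMap B) v‖
      = ‖(Matrix.toEuclideanLin.trans LinearMap.toContinuousLinearMap M) x‖ := by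
    nlinarith [norm_nonneg ((Matrix.toEuclideanLin.trans LinearMap.toContinuousLinearMap B) v),
      norm_nonneg ((Matrix.toEuclideanLin.trans LinearMap.toContinuousLinearMap M) x)]
  rw [hTv, ← hxv]
  exact h4

set_option maxHeartbeats 1000000 in
private lemma block_upper_norm_le (p q : ℕ) (a : ℂ) (C : Matrix (Fin p) (Fin q) ℂ)
    (ha : ‖a‖ ≤ 1) (hC : ‖C‖ ≤ 1 - ‖a‖^2) :
    ‖Matrix.fromBlocks (a • (1 : Matrix (Fin p) (Fin p) ℂ)) C
      (0 : Matrix (Fin q) (Fin p) ℂ) (a • (1 : Matrix (Fin q) (Fin q) ℂ))‖ ≤ 1 := by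
  set M := Matrix.fromBlocks (a • (1 : Matrix (Fin p) (Fin p) ℂ)) C
      (0 : Matrix (Fin q) (Fin p) ℂ) (a • (1 : Matrix (Fin q) (Fin q) ℂ)) with hM
  rw [Matrix.l2_opNorm_def]
  refine ContinuousLinearMap.opNorm_le_bound _ zero_le_one fun x => ?_
  rw [one_mul]
  set u : EuclideanSpace ℂ (Fin p) := (WithLp.equiv 2 _).symm (fun i => x (Sum.inl i)) with hu
  set v : EuclideanSpace ℂ (Fin q) := (WithLp.equiv 2 _).symm (fun j => x (Sum.inr j)) with hv
  have hx : x = (WithLp.equiv 2 _).symm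
      (Sum.elim (fun i => x (Sum.inl i)) (fun j => x (Sum.inr j))) := by
    ext (i | j) <;> rfl
  have hxn : ‖x‖^2 = ‖u‖^2 + ‖v‖^2 := by rw [hx, elim_normsq, hu, hv]
  have h2 : (Matrix.toEuclideanLin.trans LinearMap.toContinuousLinearMap M) x
      = (WithLp.equiv 2 _).symm (Sum.elim
          (a • (fun i => x (Sum.inl i)) + C *ᵥ (fun j => x (Sum.inr j)))
          (a • fun j => x (Sum.inr j))) := by
    show Matrix.toEuclideanLin M x = _
    conv_lhs => rw [hx]
    rw [WithLp.equiv_symm_apply, Matrix.toEuclideanLin_apply_piLp_toLp, hM, Matrix.fromBlocks_mulVec]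
    congr 1
    · simp [Matrix.smul_mulVec]
  have hTn : ‖(Matrix.toEuclideanLin.trans LinearMap.toContinuousLinearMap M) x‖^2
      = ‖a • u + (WithLp.equiv 2 (Fin p → ℂ)).symm (C *ᵥ (WithLp.equiv 2 _ v))‖^2
        + ‖a • v‖^2 := by
    rw [h2, elim_normsq]
    rfl
  have hb1 : ‖a • u + (WithLp.equiv 2 (Fin p → ℂ)).symm (C *ᵥ (WithLp.equiv 2 _ v))‖
      ≤ ‖a‖ * ‖u‖ + ‖C‖ * ‖v‖ := by
    refine (norm_add_le _ _).trans ?_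
    gcongr
    · exact (norm_smul a u).le
    · exact Matrix.l2_opNorm_mulVec C v
  have hb2 : ‖a • v‖ = ‖a‖ * ‖v‖ := norm_smul a v
  have key : ‖(Matrix.toEuclideanLin.trans LinearMap.toContinuousLinearMap M) x‖^2 ≤ ‖x‖^2 := by
    rw [hTn, hxn, hb2]
    have h1 : (0:ℝ) ≤ ‖a • u + (WithLp.equiv 2 (Fin p → ℂ)).symm (C *ᵥ (WithLp.equiv 2 _ v))‖ :=
      norm_nonneg _
    have hsq : ‖a • u + (WithLp.equiv 2 (Fin p → ℂ)).symm (C *ᵥ (WithLp.equiv 2 _ v))‖^2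
        ≤ (‖a‖ * ‖u‖ + ‖C‖ * ‖v‖)^2 := by
      apply pow_le_pow_left₀ h1 hb1
    nlinarith [sq_nonneg (‖u‖ - ‖a‖ * ‖v‖), norm_nonneg u, norm_nonneg v, norm_nonneg C,
      norm_nonneg a, mul_le_mul_of_nonneg_right hC (norm_nonneg v),
      mul_nonneg (norm_nonneg u) (norm_nonneg v), sq_nonneg (‖a‖ * ‖u‖ + ‖C‖ * ‖v‖),
      mul_nonneg (mul_nonneg (norm_nonneg a) (norm_nonneg u))
        (mul_nonneg (norm_nonneg C) (norm_nonneg v))]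
  nlinarith [norm_nonneg ((Matrix.toEuclideanLin.trans LinearMap.toContinuousLinearMap M) x),
    norm_nonneg x]

private lemma mobius_num_le_den (a b : ℂ) (ha : ‖a‖ ≤ 1) (hb : ‖b‖ ≤ 1) :
    ‖b - a‖ ≤ ‖1 - (starRingEnd ℂ) a * b‖ := by
  have hns : Complex.normSq (b - a) ≤ Complex.normSq (1 - (starRingEnd ℂ) a * b) := by
    have ha1 : Complex.normSq a ≤ 1 := by
      rw [← Complex.sq_norm]; nlinarith [norm_nonneg a]
    have hb1 : Complex.normSq b ≤ 1 := by
      rw [← Complex.sq_norm]; nlinarith [norm_nonneg b]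
    rw [Complex.normSq_apply] at ha1 hb1
    have ha' : a.re^2 + a.im^2 ≤ 1 := by nlinarith
    have hb' : b.re^2 + b.im^2 ≤ 1 := by nlinarith
    simp only [Complex.normSq_apply, Complex.sub_re, Complex.sub_im, Complex.mul_re,
      Complex.mul_im, Complex.one_re, Complex.one_im, Complex.conj_re, Complex.conj_im]
    nlinarith [mul_nonneg (sub_nonneg.mpr ha') (sub_nonneg.mpr hb')]
  calc ‖b - a‖ = Real.sqrt (Complex.normSq (b - a)) := by
        rw [Complex.norm_def]
    _ ≤ Real.sqrt (Complex.normSq (1 - (starRingEnd ℂ) a * b)) := Real.sqrt_le_sqrt hns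
    _ = ‖1 - (starRingEnd ℂ) a * b‖ := by rw [Complex.norm_def]

private lemma mobius_den_ne_zero (a b : ℂ) (ha : ‖a‖ < 1) (hb : ‖b‖ ≤ 1) :
    1 - (starRingEnd ℂ) a * b ≠ 0 := by
  intro h
  have h1 : (starRingEnd ℂ) a * b = 1 := by linear_combination -h
  have : ‖(starRingEnd ℂ) a * b‖ < 1 := by
    rw [norm_mul, RCLike.norm_conj]
    calc ‖a‖ * ‖b‖ ≤ ‖a‖ * 1 := by gcongr
      _ < 1 := by simpa using ha
  rw [h1] at this
  simp at this
set_option maxHeartbeats 1000000 in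
/-- Contractivity of `ρ_V` on all holomorphic self-maps of the disc is equivalent to
contractivity on those vanishing at `w`. -/
theorem contractive_iff_contractive_on_vanishing
    (m n p q : ℕ) (A : Fin m → Matrix (Fin n) (Fin n) ℂ)
    (hA : LinearIndependent ℂ A)
    (Ω : Set (Fin m → ℂ)) (hΩ : Ω = {z : Fin m → ℂ | ‖∑ i, z i • A i‖ < 1})
    (w : Fin m → ℂ) (hw : w ∈ Ω)
    (V : Fin m → Matrix (Fin p) (Fin q) ℂ)
    (ρ : ((Fin m → ℂ) → ℂ) → Matrix (Fin p ⊕ Fin q) (Fin p ⊕ Fin q) ℂ)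
    (hρ : ∀ f, ρ f = Matrix.fromBlocks
      (f w • (1 : Matrix (Fin p) (Fin p) ℂ))
      (∑ i, fderiv ℂ f w (Pi.single i 1) • V i)
      0
      (f w • (1 : Matrix (Fin q) (Fin q) ℂ))) :
    (∀ f : (Fin m → ℂ) → ℂ, DifferentiableOn ℂ f Ω → (∀ z ∈ Ω, ‖f z‖ ≤ 1) → ‖ρ f‖ ≤ 1) ↔
    (∀ g : (Fin m → ℂ) → ℂ, DifferentiableOn ℂ g Ω → (∀ z ∈ Ω, ‖g z‖ ≤ 1) → g w = 0 →
      ‖ρ g‖ ≤ 1) := by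
  constructor
  · intro h g hg hb _
    exact h g hg hb
  · intro H f hf hb
    -- basic topological facts about Ω
    have hcont : Continuous fun z : Fin m → ℂ => ∑ i, z i • A i :=
      continuous_finset_sum _ fun i _ => (continuous_apply i).smul continuous_const
    have hΩo : IsOpen Ω := by
      rw [hΩ]; exact isOpen_lt hcont.norm continuous_const
    have hconv : Convex ℝ Ω := by
      rw [hΩ]
      intro z₁ h₁ z₂ h₂ s t hs ht hst
      simp only [Set.mem_setOf_eq] at h₁ h₂ ⊢
      have heq : ∑ i, (s • z₁ + t • z₂) i • A i
          = (s : ℂ) • ∑ i, z₁ i • A i + (t : ℂ) • ∑ i, z₂ i • A i := by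
        rw [Finset.smul_sum, Finset.smul_sum, ← Finset.sum_add_distrib]
        refine Finset.sum_congr rfl fun i _ => ?_
        simp only [Pi.add_apply, Pi.smul_apply, Complex.real_smul, smul_smul]
        rw [add_smul]
      rw [heq]
      have hb1 : ‖(s : ℂ) • ∑ i, z₁ i • A i + (t : ℂ) • ∑ i, z₂ i • A i‖
          ≤ s * ‖∑ i, z₁ i • A i‖ + t * ‖∑ i, z₂ i • A i‖ := by
        refine (norm_add_le _ _).trans ?_
        rw [norm_smul, norm_smul, Complex.norm_real, Complex.norm_real,
          Real.norm_of_nonneg hs, Real.norm_of_nonneg ht]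
      refine lt_of_le_of_lt hb1 ?_
      rcases eq_or_lt_of_le hs with hs0 | hs0
      · have ht1 : t = 1 := by linarith
        rw [← hs0, ht1]; simpa using h₂
      · nlinarith [mul_pos hs0 (sub_pos.mpr h₁), mul_nonneg ht (sub_pos.mpr h₂).le]
    have hpre : IsPreconnected Ω := hconv.isPreconnected
    have haw : ‖f w‖ ≤ 1 := hb w hw
    by_cases hlt : ‖f w‖ < 1
    · -- Möbius transform case
      set a := f w with ha_def
      set c := (starRingEnd ℂ) a with hc_def
      have hden : ∀ z ∈ Ω, (1 : ℂ) - c * f z ≠ 0 := fun z hz =>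
        mobius_den_ne_zero a (f z) hlt (hb z hz)
      set g : (Fin m → ℂ) → ℂ := fun z => (f z - a) * (1 - c * f z)⁻¹ with hgdef
      have hgd : DifferentiableOn ℂ g Ω :=
        (hf.sub_const a).mul (((hf.const_mul c).const_sub 1).inv hden)
      have hgb : ∀ z ∈ Ω, ‖g z‖ ≤ 1 := by
        intro z hz
        have hpos : 0 < ‖(1 : ℂ) - c * f z‖ := norm_pos_iff.mpr (hden z hz)
        have hnum := mobius_num_le_den a (f z) hlt.le (hb z hz)
        calc ‖g z‖ = ‖f z - a‖ * ‖(1 - c * f z)‖⁻¹ := by rw [hgdef]; simp [norm_mul, norm_inv]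
          _ ≤ ‖(1 : ℂ) - c * f z‖ * ‖(1 - c * f z)‖⁻¹ := by gcongr
          _ = 1 := mul_inv_cancel₀ hpos.ne'
      have hgw : g w = 0 := by rw [hgdef]; simp [ha_def]
      -- derivative of g at w
      have hfd : DifferentiableAt ℂ f w := hf.differentiableAt (hΩo.mem_nhds hw)
      have hL : HasFDerivAt f (fderiv ℂ f w) w := hfd.hasFDerivAt
      have h1 : HasFDerivAt (fun z => (1 : ℂ) - c * f z) (-(c • fderiv ℂ f w)) w :=
        (hL.const_mul c).const_sub 1
      have h2 : HasFDerivAt (fun z => ((1 : ℂ) - c * f z)⁻¹)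
          ((-(((1 : ℂ) - c * f w) ^ 2)⁻¹) • (-(c • fderiv ℂ f w))) w :=
        (hasDerivAt_inv (hden w hw)).comp_hasFDerivAt w h1
      have h3 : HasFDerivAt g
          ((f w - a) • ((-(((1 : ℂ) - c * f w) ^ 2)⁻¹) • (-(c • fderiv ℂ f w)))
            + ((1 : ℂ) - c * f w)⁻¹ • fderiv ℂ f w) w :=
        (hL.sub_const a).mul h2
      have hLg : fderiv ℂ g w = ((1 : ℂ) - c * a)⁻¹ • fderiv ℂ f w := by
        rw [h3.fderiv, ← ha_def, sub_self]; ext v; simp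
      -- the value of the off-diagonal block of ρ g
      have hρg : ρ g = Matrix.fromBlocks 0
          ((((1 : ℂ) - c * a)⁻¹) • ∑ i, fderiv ℂ f w (Pi.single i 1) • V i) 0 0 := by
        have hsum : (∑ i, fderiv ℂ g w (Pi.single i 1) • V i)
            = (((1 : ℂ) - c * a)⁻¹) • ∑ i, fderiv ℂ f w (Pi.single i 1) • V i := by
          rw [hLg, Finset.smul_sum]
          refine Finset.sum_congr rfl fun i _ => ?_
          rw [ContinuousLinearMap.smul_apply, smul_eq_mul, mul_smul]
        rw [hρ, hgw, hsum, zero_smul, zero_smul]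
      have h4 : ‖ρ g‖ ≤ 1 := H g hgd hgb hgw
      have h5 : ‖(((1 : ℂ) - c * a)⁻¹) • ∑ i, fderiv ℂ f w (Pi.single i 1) • V i‖ ≤ 1 := by
        refine le_trans (block_B_norm_le p q _) ?_
        rw [← hρg]; exact h4
      have hdc : (1 : ℂ) - c * a = ((1 - ‖a‖ ^ 2 : ℝ) : ℂ) := by
        rw [hc_def, mul_comm, Complex.mul_conj, Complex.normSq_eq_norm_sq]
        push_cast
        ring
      have hd : 0 < 1 - ‖a‖ ^ 2 := by nlinarith [norm_nonneg a]
      have hnormdc : ‖((1 : ℂ) - c * a)⁻¹‖ = (1 - ‖a‖ ^ 2)⁻¹ := by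
        rw [norm_inv, hdc, Complex.norm_real, Real.norm_of_nonneg hd.le]
      have hC : ‖∑ i, fderiv ℂ f w (Pi.single i 1) • V i‖ ≤ 1 - ‖a‖ ^ 2 := by
        rw [norm_smul, hnormdc] at h5
        have h6 := mul_le_mul_of_nonneg_left h5 hd.le
        rw [← mul_assoc, mul_inv_cancel₀ hd.ne', one_mul, mul_one] at h6
        exact h6
      rw [hρ]
      exact block_upper_norm_le p q (f w) _ haw hC
    · -- maximum modulus case: |f w| = 1, f is constant
      have ha1 : ‖f w‖ = 1 := le_antisymm haw (not_lt.mp hlt)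
      have hmax : IsMaxOn (norm ∘ f) Ω w := by
        refine isMaxOn_iff.mpr fun z hz => ?_
        simpa [ha1] using hb z hz
      have heq : Set.EqOn f (Function.const _ (f w)) Ω :=
        Complex.eqOn_of_isPreconnected_of_isMaxOn_norm hpre hΩo hf hw hmax
      have hev : f =ᶠ[nhds w] fun _ => f w :=
        Filter.eventuallyEq_of_mem (hΩo.mem_nhds hw) heq
      have hfd : fderiv ℂ f w = 0 := by
        rw [hev.fderiv_eq]
        exact fderiv_const_apply _
      rw [hρ]
      have hsum : (∑ i, fderiv ℂ f w (Pi.single i 1) • V i)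
          = (0 : Matrix (Fin p) (Fin q) ℂ) := by
        simp [hfd]
      rw [hsum]
      refine block_upper_norm_le p q (f w) 0 haw ?_
      rw [norm_zero, ha1]
      norm_num
end

section
/- Let d, c ∈ ℂ and b ≥ 0 real, and set A₁ = [[1,0],[0,d]], A₂ = [[1,b],[c,0]], Z₁ = [[1,0],[0,0]], Z₂ = [[0,1],[0,0]]. If |d| ≠ 1 and b ≠ |c|, then the operator norm of the 4×4 matrix A₁⊗Z₁ + A₂⊗Z₂ is different from the operator norm of A₁ᵗ⊗Z₁ + A₂ᵗ⊗Z₂, where Aᵗ denotes the (non-conjugated) transpose. -/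
open Matrix
open scoped Matrix.Norms.L2Operator Kronecker

open Complex
open scoped ComplexConjugate

set_option maxHeartbeats 1000000


lemma opNorm_le_of_bound {ι : Type*} [Fintype ι] [DecidableEq ι] (A : Matrix ι ι ℂ) {t : ℝ}
    (ht : 0 ≤ t)
    (h : ∀ x : EuclideanSpace ℂ ι, ‖(EuclideanSpace.equiv ι ℂ).symm (A *ᵥ x)‖ ≤ t * ‖x‖) :
    ‖A‖ ≤ t := by
  rw [Matrix.l2_opNorm_def]
  exact ContinuousLinearMap.opNorm_le_bound _ ht fun x => h x

lemma le_opNorm_of_eigen {ι : Type*} [Fintype ι] [DecidableEq ι] (A : Matrix ι ι ℂ) {t : ℝ}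
    (ht : 0 ≤ t) (v : EuclideanSpace ℂ ι) (hv : v ≠ 0)
    (he : ∀ i, (A *ᵥ v) i = (t : ℂ) * v i) : t ≤ ‖A‖ := by
  have h1 := Matrix.l2_opNorm_mulVec A v
  have h2 : ‖(EuclideanSpace.equiv ι ℂ).symm (A *ᵥ v)‖ = t * ‖v‖ := by
    rw [EuclideanSpace.norm_eq, EuclideanSpace.norm_eq]
    have key : ∀ i, ‖(EuclideanSpace.equiv ι ℂ).symm (A *ᵥ v) i‖ ^ 2
        = t ^ 2 * ‖(v : EuclideanSpace ℂ ι) i‖ ^ 2 := by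
      intro i
      have : ((EuclideanSpace.equiv ι ℂ).symm (A *ᵥ v)) i = (A *ᵥ v) i := rfl
      rw [this, he i, norm_mul, Complex.norm_real, mul_pow, Real.norm_eq_abs, _root_.sq_abs]
    simp_rw [key]
    rw [← Finset.mul_sum, Real.sqrt_mul (sq_nonneg t), Real.sqrt_sq ht]
  rw [h2] at h1
  exact le_of_mul_le_mul_right h1 (norm_pos_iff.mpr hv)

lemma key_ineq (α γ lam : ℝ) (β w0 w1 : ℂ)
    (hα : 0 ≤ α) (hγ : 0 ≤ γ) (h1 : α ≤ lam) (h2 : γ ≤ lam)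
    (hmul : (lam - α) * (lam - γ) = ‖β‖ ^ 2) :
    ‖(α : ℂ) * w0 + conj β * w1‖ ^ 2 + ‖β * w0 + (γ : ℂ) * w1‖ ^ 2
      ≤ lam ^ 2 * (‖w0‖ ^ 2 + ‖w1‖ ^ 2) := by
  have hn : ∀ z : ℂ, ‖z‖ ^ 2 = Complex.normSq z := fun z => by
    rw [Complex.sq_norm]
  set r := ‖β‖ with hr
  set x := ‖w0‖ with hx
  set y := ‖w1‖ with hy
  set t := (β * w0 * conj w1).re with htdef
  have e1 : ‖(α : ℂ) * w0 + conj β * w1‖ ^ 2 = α ^ 2 * x ^ 2 + r ^ 2 * y ^ 2 + 2 * α * t := by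
    rw [hn, hx, hy, hr, hn, hn, hn]
    simp only [Complex.normSq_apply, Complex.add_re, Complex.add_im, Complex.mul_re,
      Complex.mul_im, Complex.conj_re, Complex.conj_im, Complex.ofReal_re, Complex.ofReal_im,
      htdef]
    ring
  have e2 : ‖β * w0 + (γ : ℂ) * w1‖ ^ 2 = r ^ 2 * x ^ 2 + γ ^ 2 * y ^ 2 + 2 * γ * t := by
    rw [hn, hx, hy, hr, hn, hn, hn]
    simp only [Complex.normSq_apply, Complex.add_re, Complex.add_im, Complex.mul_re,
      Complex.mul_im, Complex.conj_re, Complex.conj_im, Complex.ofReal_re, Complex.ofReal_im,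
      htdef]
    ring
  have ht : |t| ≤ r * x * y := by
    calc |t| ≤ ‖β * w0 * conj w1‖ := Complex.abs_re_le_norm _
    _ = r * x * y := by rw [norm_mul, norm_mul, RCLike.norm_conj]
  have hx0 : 0 ≤ x := norm_nonneg _
  have hy0 : 0 ≤ y := norm_nonneg _
  have hr0 : 0 ≤ r := norm_nonneg _
  have hsq : Real.sqrt (lam - α) * Real.sqrt (lam - γ) = r := by
    rw [← Real.sqrt_mul (by linarith), hmul, Real.sqrt_sq hr0]
  have hsq' : Real.sqrt (lam - α) * Real.sqrt (lam - γ) * (x * y) = r * (x * y) := by rw [hsq]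
  have hbr : 2 * r * (x * y) ≤ (lam - α) * x ^ 2 + (lam - γ) * y ^ 2 := by
    nlinarith [sq_nonneg (Real.sqrt (lam - α) * x - Real.sqrt (lam - γ) * y),
      Real.sq_sqrt (show (0:ℝ) ≤ lam - α by linarith),
      Real.sq_sqrt (show (0:ℝ) ≤ lam - γ by linarith), hsq']
  have ht1 : t ≤ r * x * y := le_trans (le_abs_self t) ht
  rw [e1, e2]
  nlinarith [mul_le_mul_of_nonneg_left hbr (show (0:ℝ) ≤ α + γ by linarith),
    mul_le_mul_of_nonneg_left ht1 (show (0:ℝ) ≤ 2 * (α + γ) by linarith),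
    hmul, sq_nonneg x, sq_nonneg y]

def Gmat (α γ : ℝ) (β : ℂ) : Matrix (Fin 2 × Fin 2) (Fin 2 × Fin 2) ℂ :=
  Matrix.of fun p q =>
    if p = (0, 0) then
      (if q = (0, 0) then (α : ℂ) else if q = (1, 0) then conj β else 0)
    else if p = (1, 0) then
      (if q = (0, 0) then β else if q = (1, 0) then (γ : ℂ) else 0)
    else 0

lemma Gmat_mulVec (α γ : ℝ) (β : ℂ) (x : EuclideanSpace ℂ (Fin 2 × Fin 2)) :
    (Gmat α γ β *ᵥ x) (0,0) = (α : ℂ) * x (0,0) + conj β * x (1,0) ∧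
    (Gmat α γ β *ᵥ x) (1,0) = β * x (0,0) + (γ : ℂ) * x (1,0) ∧
    (Gmat α γ β *ᵥ x) (0,1) = 0 ∧ (Gmat α γ β *ᵥ x) (1,1) = 0 := by
  refine ⟨?_, ?_, ?_, ?_⟩ <;>
  simp [Gmat, mulVec, dotProduct, Fintype.sum_prod_type, Fin.sum_univ_two, Prod.ext_iff]

lemma norm_Gmat (α γ : ℝ) (β : ℂ) (hα : 0 ≤ α) (hγ : 0 ≤ γ) :
    ‖Gmat α γ β‖ = (α + γ + Real.sqrt ((α - γ) ^ 2 + 4 * ‖β‖ ^ 2)) / 2 := by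
  set r := ‖β‖ with hr
  set s := Real.sqrt ((α - γ) ^ 2 + 4 * r ^ 2) with hsdef
  set lam := (α + γ + s) / 2 with hlamdef
  have hr0 : 0 ≤ r := norm_nonneg β
  have hs0 : 0 ≤ s := Real.sqrt_nonneg _
  have hs2 : s ^ 2 = (α - γ) ^ 2 + 4 * r ^ 2 := Real.sq_sqrt (by positivity)
  have habs : |α - γ| ≤ s := by
    rw [hsdef, ← Real.sqrt_sq_eq_abs]
    exact Real.sqrt_le_sqrt (by nlinarith [sq_nonneg r])
  obtain ⟨hd1, hd2⟩ := abs_le.mp habs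
  have h1 : α ≤ lam := by rw [hlamdef]; linarith
  have h2 : γ ≤ lam := by rw [hlamdef]; linarith
  have hlam0 : 0 ≤ lam := by rw [hlamdef]; linarith
  have hmul : (lam - α) * (lam - γ) = r ^ 2 := by
    rw [hlamdef]; nlinarith [hs2]
  clear_value r s lam
  have hub : ‖Gmat α γ β‖ ≤ lam := by
    refine opNorm_le_of_bound _ hlam0 fun x => ?_
    have hv00 : (Gmat α γ β *ᵥ x) (0,0) = (α : ℂ) * x (0,0) + conj β * x (1,0) := by
      simp [Gmat, mulVec, dotProduct, Fintype.sum_prod_type, Fin.sum_univ_two, Prod.ext_iff]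
    have hv10 : (Gmat α γ β *ᵥ x) (1,0) = β * x (0,0) + (γ : ℂ) * x (1,0) := by
      simp [Gmat, mulVec, dotProduct, Fintype.sum_prod_type, Fin.sum_univ_two, Prod.ext_iff]
    have hv01 : (Gmat α γ β *ᵥ x) (0,1) = 0 := by
      simp [Gmat, mulVec, dotProduct, Fintype.sum_prod_type, Fin.sum_univ_two, Prod.ext_iff]
    have hv11 : (Gmat α γ β *ᵥ x) (1,1) = 0 := by
      simp [Gmat, mulVec, dotProduct, Fintype.sum_prod_type, Fin.sum_univ_two, Prod.ext_iff]
    have key : ‖(EuclideanSpace.equiv (Fin 2 × Fin 2) ℂ).symm (Gmat α γ β *ᵥ x)‖ ^ 2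
        ≤ (lam * ‖x‖) ^ 2 := by
      rw [EuclideanSpace.norm_eq, EuclideanSpace.norm_eq, mul_pow,
        Real.sq_sqrt (Finset.sum_nonneg fun i _ => sq_nonneg _),
        Real.sq_sqrt (Finset.sum_nonneg fun i _ => sq_nonneg _)]
      have hco : ∀ p, ((EuclideanSpace.equiv (Fin 2 × Fin 2) ℂ).symm (Gmat α γ β *ᵥ x)) p
          = (Gmat α γ β *ᵥ x) p := fun _ => rfl
      simp_rw [hco]
      rw [Fintype.sum_prod_type, Fintype.sum_prod_type, Fin.sum_univ_two, Fin.sum_univ_two,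
        Fin.sum_univ_two, Fin.sum_univ_two, Fin.sum_univ_two, Fin.sum_univ_two]
      rw [hv00, hv10, hv01, hv11, norm_zero]
      have hk := key_ineq α γ lam β (x (0,0)) (x (1,0)) hα hγ h1 h2 (hr ▸ hmul)
      nlinarith [hk, mul_nonneg (sq_nonneg lam) (sq_nonneg ‖x (0,1)‖),
        mul_nonneg (sq_nonneg lam) (sq_nonneg ‖x (1,1)‖)]
    have := Real.sqrt_le_sqrt key
    rwa [Real.sqrt_sq (norm_nonneg _), Real.sqrt_sq (mul_nonneg hlam0 (norm_nonneg _))] at this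
  have hlb : lam ≤ ‖Gmat α γ β‖ := by
    by_cases hc : β = 0 ∧ lam = α
    · obtain ⟨hb0, hla⟩ := hc
      set v : EuclideanSpace ℂ (Fin 2 × Fin 2) :=
        (EuclideanSpace.equiv (Fin 2 × Fin 2) ℂ).symm
          (fun p => if p = (0, 0) then 1 else 0) with hvdef
      refine le_opNorm_of_eigen _ hlam0 v ?_ ?_
      · intro h
        have : v (0, 0) = 0 := by rw [h]; rfl
        simp [hvdef] at this
      · rintro ⟨i, k⟩
        fin_cases i <;> fin_cases k <;>
          simp [hvdef, Gmat, mulVec, dotProduct, Fintype.sum_prod_type, Fin.sum_univ_two,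
            Prod.ext_iff, hb0, hla]
    · have hc' : β ≠ 0 ∨ lam ≠ α := by tauto
      set v : EuclideanSpace ℂ (Fin 2 × Fin 2) :=
        (EuclideanSpace.equiv (Fin 2 × Fin 2) ℂ).symm
          (fun p => if p = (0, 0) then conj β else if p = (1, 0) then ((lam - α : ℝ) : ℂ) else 0)
          with hvdef
      have hnsq : Complex.normSq β = r ^ 2 := by
        rw [hr, ← Complex.sq_norm]
      obtain ⟨hm00, hm10, hm01, hm11⟩ := Gmat_mulVec α γ β v
      have hv00 : v (0,0) = conj β := rfl
      have hv10 : v (1,0) = ((lam - α : ℝ) : ℂ) := rfl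
      have hv01 : v (0,1) = 0 := rfl
      have hv11 : v (1,1) = 0 := rfl
      refine le_opNorm_of_eigen _ hlam0 v ?_ ?_
      · intro h
        rcases hc' with hb | hl
        · have : v (0, 0) = 0 := by rw [h]; rfl
          rw [hv00] at this
          simp at this
          exact hb this
        · have : v (1, 0) = 0 := by rw [h]; rfl
          rw [hv10] at this
          rw [Complex.ofReal_eq_zero, sub_eq_zero] at this
          exact hl this
      · rintro ⟨i, k⟩
        fin_cases i <;> fin_cases k
        · show (Gmat α γ β *ᵥ v) (0,0) = (lam : ℂ) * v (0,0)
          rw [hm00, hv00, hv10]; push_cast; ring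
        · show (Gmat α γ β *ᵥ v) (0,1) = (lam : ℂ) * v (0,1)
          rw [hm01, hv01, mul_zero]
        · show (Gmat α γ β *ᵥ v) (1,0) = (lam : ℂ) * v (1,0)
          rw [hm10, hv00, hv10, Complex.mul_conj, hnsq]
          have hre : r ^ 2 + γ * (lam - α) = lam * (lam - α) := by linear_combination -hmul
          push_cast
          exact_mod_cast hre
        · show (Gmat α γ β *ᵥ v) (1,1) = (lam : ℂ) * v (1,1)
          rw [hm11, hv11, mul_zero]
  linarith [hub, hlb]

lemma gram_M (d c : ℂ) (b : ℝ) :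
    ((!![(1 : ℂ), 0; 0, d]) ⊗ₖ (!![(1 : ℂ), 0; 0, 0]) +
        (!![(1 : ℂ), (b : ℂ); c, 0]) ⊗ₖ (!![(0 : ℂ), 1; 0, 0])) *
      ((!![(1 : ℂ), 0; 0, d]) ⊗ₖ (!![(1 : ℂ), 0; 0, 0]) +
        (!![(1 : ℂ), (b : ℂ); c, 0]) ⊗ₖ (!![(0 : ℂ), 1; 0, 0]))ᴴ
      = Gmat (2 + b ^ 2) (‖c‖ ^ 2 + ‖d‖ ^ 2) c := by
  have hnc : c * conj c = ((‖c‖ ^ 2 : ℝ) : ℂ) := by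
    rw [Complex.mul_conj]; norm_cast; rw [Complex.normSq_eq_norm_sq]
  have hnd : d * conj d = ((‖d‖ ^ 2 : ℝ) : ℂ) := by
    rw [Complex.mul_conj]; norm_cast; rw [Complex.normSq_eq_norm_sq]
  ext ⟨i, k⟩ ⟨j, l⟩
  fin_cases i <;> fin_cases k <;> fin_cases j <;> fin_cases l <;>
    simp only [Fin.mk_zero, Fin.mk_one] <;>
    simp [Gmat, Matrix.mul_apply, Fintype.sum_prod_type, Fin.sum_univ_two,
      Matrix.conjTranspose_apply, Prod.ext_iff, hnc, hnd, Complex.conj_ofReal] <;>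
    push_cast <;> ring

lemma gram_N (d c : ℂ) (b : ℝ) :
    ((!![(1 : ℂ), 0; 0, d])ᵀ ⊗ₖ (!![(1 : ℂ), 0; 0, 0]) +
        (!![(1 : ℂ), (b : ℂ); c, 0])ᵀ ⊗ₖ (!![(0 : ℂ), 1; 0, 0])) *
      ((!![(1 : ℂ), 0; 0, d])ᵀ ⊗ₖ (!![(1 : ℂ), 0; 0, 0]) +
        (!![(1 : ℂ), (b : ℂ); c, 0])ᵀ ⊗ₖ (!![(0 : ℂ), 1; 0, 0]))ᴴ
      = Gmat (2 + ‖c‖ ^ 2) (b ^ 2 + ‖d‖ ^ 2) (b : ℂ) := by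
  have hA1 : (!![(1 : ℂ), 0; 0, d])ᵀ = !![(1 : ℂ), 0; 0, d] := by
    ext i j; fin_cases i <;> fin_cases j <;> rfl
  have hA2 : (!![(1 : ℂ), (b : ℂ); c, 0])ᵀ = !![(1 : ℂ), c; (b : ℂ), 0] := by
    ext i j; fin_cases i <;> fin_cases j <;> rfl
  rw [hA1, hA2]
  have hnc : c * conj c = ((‖c‖ ^ 2 : ℝ) : ℂ) := by
    rw [Complex.mul_conj]; norm_cast; rw [Complex.normSq_eq_norm_sq]
  have hnd : d * conj d = ((‖d‖ ^ 2 : ℝ) : ℂ) := by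
    rw [Complex.mul_conj]; norm_cast; rw [Complex.normSq_eq_norm_sq]
  ext ⟨i, k⟩ ⟨j, l⟩
  fin_cases i <;> fin_cases k <;> fin_cases j <;> fin_cases l <;>
    simp only [Fin.mk_zero, Fin.mk_one] <;>
    simp [Gmat, Matrix.mul_apply, Fintype.sum_prod_type, Fin.sum_univ_two,
      Matrix.conjTranspose_apply, Matrix.transpose_apply, Prod.ext_iff, hnc, hnd,
      Complex.conj_ofReal] <;>
    push_cast <;> ring

/-- If `|d| ≠ 1` and `b ≠ |c|`, then `A = (A₁, A₂)` and its transpose `Aᵗ` give different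
norms to the element `(Z₁, Z₂)`, i.e. `‖A₁⊗Z₁ + A₂⊗Z₂‖_op ≠ ‖A₁ᵗ⊗Z₁ + A₂ᵗ⊗Z₂‖_op`. -/
theorem transpose_operator_space_distinct
    (d c : ℂ) (b : ℝ) (hb : 0 ≤ b) (hd : ‖d‖ ≠ 1) (hbc : b ≠ ‖c‖) :
    ‖(!![(1 : ℂ), 0; 0, d]) ⊗ₖ (!![(1 : ℂ), 0; 0, 0]) +
        (!![(1 : ℂ), (b : ℂ); c, 0]) ⊗ₖ (!![(0 : ℂ), 1; 0, 0])‖ ≠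
      ‖(!![(1 : ℂ), 0; 0, d])ᵀ ⊗ₖ (!![(1 : ℂ), 0; 0, 0]) +
        (!![(1 : ℂ), (b : ℂ); c, 0])ᵀ ⊗ₖ (!![(0 : ℂ), 1; 0, 0])‖ := by
  intro heq
  set M := (!![(1 : ℂ), 0; 0, d]) ⊗ₖ (!![(1 : ℂ), 0; 0, 0]) +
      (!![(1 : ℂ), (b : ℂ); c, 0]) ⊗ₖ (!![(0 : ℂ), 1; 0, 0]) with hMdef
  set N := (!![(1 : ℂ), 0; 0, d])ᵀ ⊗ₖ (!![(1 : ℂ), 0; 0, 0]) +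
      (!![(1 : ℂ), (b : ℂ); c, 0])ᵀ ⊗ₖ (!![(0 : ℂ), 1; 0, 0]) with hNdef
  have eM : ‖M * Mᴴ‖ = ‖M‖ * ‖M‖ := by
    have := Matrix.l2_opNorm_conjTranspose_mul_self (Mᴴ)
    rwa [conjTranspose_conjTranspose, Matrix.l2_opNorm_conjTranspose] at this
  have eN : ‖N * Nᴴ‖ = ‖N‖ * ‖N‖ := by
    have := Matrix.l2_opNorm_conjTranspose_mul_self (Nᴴ)
    rwa [conjTranspose_conjTranspose, Matrix.l2_opNorm_conjTranspose] at this
  rw [hMdef, gram_M d c b, norm_Gmat _ _ _ (by positivity) (by positivity)] at eM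
  rw [hNdef, gram_N d c b, norm_Gmat _ _ _ (by positivity) (by positivity)] at eN
  rw [← hMdef] at eM
  rw [← hNdef] at eN
  set y := ‖c‖ with hy
  set z := ‖d‖ with hz
  have hy0 : 0 ≤ y := norm_nonneg _
  have hz0 : 0 ≤ z := norm_nonneg _
  have hnb : ‖(b : ℂ)‖ = b := by
    rw [Complex.norm_real, Real.norm_eq_abs, _root_.abs_of_nonneg hb]
  rw [hnb] at eN
  have hnn : ‖M‖ * ‖M‖ = ‖N‖ * ‖N‖ := by rw [heq]
  have h1nn : (0:ℝ) ≤ (2 + b ^ 2 - (y ^ 2 + z ^ 2)) ^ 2 + 4 * y ^ 2 := by positivity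
  have h2nn : (0:ℝ) ≤ (2 + y ^ 2 - (b ^ 2 + z ^ 2)) ^ 2 + 4 * b ^ 2 := by positivity
  have hsq1 : Real.sqrt ((2 + b ^ 2 - (y ^ 2 + z ^ 2)) ^ 2 + 4 * y ^ 2)
      = Real.sqrt ((2 + y ^ 2 - (b ^ 2 + z ^ 2)) ^ 2 + 4 * b ^ 2) := by
    linarith [eM, eN, hnn]
  have hDeq : (2 + b ^ 2 - (y ^ 2 + z ^ 2)) ^ 2 + 4 * y ^ 2
      = (2 + y ^ 2 - (b ^ 2 + z ^ 2)) ^ 2 + 4 * b ^ 2 := by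
    rw [← Real.sq_sqrt h1nn, ← Real.sq_sqrt h2nn, hsq1]
  have hkey : (b ^ 2 - y ^ 2) * (1 - z ^ 2) = 0 := by linear_combination hDeq / 4
  rcases mul_eq_zero.mp hkey with h | h
  · have : (b - y) * (b + y) = 0 := by linear_combination h
    rcases mul_eq_zero.mp this with h' | h'
    · exact hbc (by linarith)
    · exact hbc (by linarith)
  · have : (1 - z) * (1 + z) = 0 := by linear_combination h
    rcases mul_eq_zero.mp this with h' | h'
    · exact hd (by linarith)
    · linarith
end

section
/- Let A₁ = [[1,0],[0,1]] and A₂ = [[0,1],[0,0]], with the norm ‖(z₁,z₂)‖_A = ‖z₁A₁+z₂A₂‖_op on ℂ², and let ‖(ω₁,ω₂)‖_A* = sup{|ω₁z₁+ω₂z₂| : ‖(z₁,z₂)‖_A ≤ 1} be the dual norm. Then for all (ω₁,ω₂) ∈ ℂ² with ω₂ ≠ 0: if |ω₂| ≥ |ω₁|/2 then ‖(ω₁,ω₂)‖_A* = (|ω₁|² + 4|ω₂|²)/(4|ω₂|), and if |ω₂| ≤ |ω₁|/2 then ‖(ω₁,ω₂)‖_A* = |ω₁|. -/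
open Matrix
open scoped Matrix.Norms.L2Operator


lemma normM_le (z₁ z₂ : ℂ) (h : ‖z₁‖^2 + ‖z₂‖ ≤ 1) :
    ‖(!![z₁, z₂; 0, z₁] : Matrix (Fin 2) (Fin 2) ℂ)‖ ≤ 1 := by
  rw [Matrix.l2_opNorm_def]
  apply ContinuousLinearMap.opNorm_le_bound _ zero_le_one
  intro v
  rw [one_mul]
  have hv : ‖v‖ = Real.sqrt (‖v 0‖^2 + ‖v 1‖^2) := by
    rw [EuclideanSpace.norm_eq]; simp [Fin.sum_univ_two]
  have happ : ‖(Matrix.toEuclideanLin (!![z₁, z₂; 0, z₁] : Matrix (Fin 2) (Fin 2) ℂ)).toContinuousLinearMap v‖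
      = Real.sqrt (‖z₁ * v 0 + z₂ * v 1‖^2 + ‖z₁ * v 1‖^2) := by
    rw [EuclideanSpace.norm_eq]
    simp [Matrix.toEuclideanLin_apply, Matrix.mulVec, dotProduct, Fin.sum_univ_two]
  rw [LinearEquiv.trans_apply] at *
  rw [happ, hv]
  apply Real.sqrt_le_sqrt
  set x := ‖z₁‖; set y := ‖z₂‖; set c := ‖v 0‖; set s := ‖v 1‖
  have hx : 0 ≤ x := norm_nonneg _
  have hy : 0 ≤ y := norm_nonneg _
  have hc : 0 ≤ c := norm_nonneg _
  have hs : 0 ≤ s := norm_nonneg _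
  have h1 : ‖z₁ * v 0 + z₂ * v 1‖ ≤ x * c + y * s := by
    calc ‖z₁ * v 0 + z₂ * v 1‖ ≤ ‖z₁ * v 0‖ + ‖z₂ * v 1‖ := norm_add_le _ _
    _ = x * c + y * s := by rw [norm_mul, norm_mul]
  have h2 : ‖z₁ * v 1‖ = x * s := norm_mul _ _
  have h3 : ‖z₁ * v 0 + z₂ * v 1‖^2 ≤ (x*c + y*s)^2 := by
    apply sq_le_sq' <;> nlinarith [norm_nonneg (z₁ * v 0 + z₂ * v 1)]
  rw [h2]
  have ha : 0 ≤ 1 - x^2 := by nlinarith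
  have ha2 : y ≤ 1 - x^2 := by nlinarith
  have key : (x*c+y*s)^2 + (x*s)^2 ≤ c^2 + s^2 := by
    rcases eq_or_lt_of_le ha with ha0 | ha0
    · have hx1 : x^2 = 1 := by linarith
      have hy0 : y = 0 := by linarith
      rw [hy0]; nlinarith [hx1]
    · nlinarith [sq_nonneg ((1-x^2)*c - x*y*s),
        mul_nonneg (mul_nonneg (sub_nonneg.2 ha2) (show (0:ℝ) ≤ 1-x^2+y by linarith)) (sq_nonneg s),
        mul_nonneg hc hs, mul_nonneg hx hy]
  linarith


lemma test_vector (z₁ z₂ a b : ℂ)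
    (h : ‖(!![z₁, z₂; 0, z₁] : Matrix (Fin 2) (Fin 2) ℂ)‖ ≤ 1)
    (hab : ‖a‖^2 + ‖b‖^2 ≤ 1) :
    ‖z₁*a + z₂*b‖^2 + ‖z₁*b‖^2 ≤ 1 := by
  have hb := Matrix.l2_opNorm_mulVec (!![z₁, z₂; 0, z₁] : Matrix (Fin 2) (Fin 2) ℂ)
      ((WithLp.equiv 2 (Fin 2 → ℂ)).symm ![a, b])
  have h1 : ‖(EuclideanSpace.equiv (Fin 2) ℂ).symm <|
      (!![z₁, z₂; 0, z₁] : Matrix (Fin 2) (Fin 2) ℂ) *ᵥ ((WithLp.equiv 2 (Fin 2 → ℂ)).symm ![a,b])‖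
      = Real.sqrt (‖z₁*a + z₂*b‖^2 + ‖z₁*b‖^2) := by
    rw [EuclideanSpace.norm_eq]
    simp [Matrix.mulVec, dotProduct, Fin.sum_univ_two]
    rw [mul_comm a z₁, mul_comm b z₂, mul_comm ‖b‖ ‖z₁‖]
  have h2 : ‖(WithLp.equiv 2 (Fin 2 → ℂ)).symm ![a, b]‖ = Real.sqrt (‖a‖^2 + ‖b‖^2) := by
    rw [EuclideanSpace.norm_eq]
    simp [Fin.sum_univ_two]
  rw [h1, h2] at hb
  have h3 : Real.sqrt (‖z₁*a + z₂*b‖^2 + ‖z₁*b‖^2) ≤ 1 := by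
    calc Real.sqrt (‖z₁*a + z₂*b‖^2 + ‖z₁*b‖^2)
        ≤ ‖!![z₁, z₂; 0, z₁]‖ * Real.sqrt (‖a‖^2 + ‖b‖^2) := hb
      _ ≤ 1 * 1 := by
          apply mul_le_mul h _ (Real.sqrt_nonneg _) zero_le_one
          rw [show (1:ℝ) = Real.sqrt 1 by simp]
          exact Real.sqrt_le_sqrt hab
      _ = 1 := one_mul 1
  have h4 : (0:ℝ) ≤ ‖z₁*a + z₂*b‖^2 + ‖z₁*b‖^2 := by positivity
  nlinarith [Real.sq_sqrt h4, Real.sqrt_nonneg (‖z₁*a + z₂*b‖^2 + ‖z₁*b‖^2)]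


set_option maxHeartbeats 1000000 in
lemma le_of_normM (z₁ z₂ : ℂ)
    (h : ‖(!![z₁, z₂; 0, z₁] : Matrix (Fin 2) (Fin 2) ℂ)‖ ≤ 1) :
    ‖z₁‖^2 + ‖z₂‖ ≤ 1 := by
  set x := ‖z₁‖ with hxdef
  set y := ‖z₂‖ with hydef
  have hx0 : 0 ≤ x := norm_nonneg _
  have hy0 : 0 ≤ y := norm_nonneg _
  have hx1 : x ≤ 1 := by
    have := test_vector z₁ z₂ 1 0 h (by simp)
    simp only [mul_one, mul_zero, add_zero, norm_zero] at this
    nlinarith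
  by_cases hy : y = 0
  · rw [hy]; nlinarith
  by_cases hx : x = 0
  · have := test_vector z₁ z₂ 0 1 h (by simp)
    simp only [mul_one, mul_zero, zero_add, norm_zero] at this
    rw [hx]; nlinarith
  have hxp : 0 < x := lt_of_le_of_ne hx0 (Ne.symm hx)
  have hyp : 0 < y := lt_of_le_of_ne hy0 (Ne.symm hy)
  set d := Real.sqrt (4*x^2 + y^2) with hddef
  have hd2 : d^2 = 4*x^2 + y^2 := Real.sq_sqrt (by positivity)
  have hd0 : 0 < d := Real.sqrt_pos.2 (by positivity)
  have hdy : y ≤ d := by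
    rw [hddef]
    exact (Real.le_sqrt hy0 (by positivity)).2 (by nlinarith)
  set c := Real.sqrt ((d-y)/(2*d)) with hcdef
  set s := Real.sqrt ((d+y)/(2*d)) with hsdef
  have hc2 : c^2 = (d-y)/(2*d) := Real.sq_sqrt (div_nonneg (by linarith) (by linarith))
  have hs2 : s^2 = (d+y)/(2*d) := Real.sq_sqrt (div_nonneg (by linarith) (by linarith))
  have hc0 : 0 ≤ c := Real.sqrt_nonneg _
  have hs0 : 0 ≤ s := Real.sqrt_nonneg _
  have hcs : c * s = x / d := by
    rw [hcdef, hsdef, ← Real.sqrt_mul (div_nonneg (by linarith) (by linarith))]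
    rw [show (d-y)/(2*d) * ((d+y)/(2*d)) = (x/d)^2 by
      field_simp; nlinarith [hd2]]
    exact Real.sqrt_sq (div_nonneg hx0 hd0.le)
  set a := ((c/x : ℝ) : ℂ) with hadef
  set b := ((s/y : ℝ) : ℂ) with hbdef
  have hna : ‖a * (starRingEnd ℂ) z₁‖ = c := by
    rw [norm_mul, hadef, Complex.norm_real, RCLike.norm_conj, Real.norm_eq_abs,
      abs_of_nonneg (div_nonneg hc0 hx0), ← hxdef]
    exact div_mul_cancel₀ c hx
  have hnb : ‖b * (starRingEnd ℂ) z₂‖ = s := by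
    rw [norm_mul, hbdef, Complex.norm_real, RCLike.norm_conj, Real.norm_eq_abs,
      abs_of_nonneg (div_nonneg hs0 hy0), ← hydef]
    exact div_mul_cancel₀ s hy
  have hab : ‖a * (starRingEnd ℂ) z₁‖^2 + ‖b * (starRingEnd ℂ) z₂‖^2 ≤ 1 := by
    rw [hna, hnb, hc2, hs2, ← add_div,
      show d - y + (d + y) = 2*d by ring, div_self (by positivity)]
  have key := test_vector z₁ z₂ (a * (starRingEnd ℂ) z₁) (b * (starRingEnd ℂ) z₂) h hab
  have hz1c : z₁ * (starRingEnd ℂ) z₁ = ((x^2 : ℝ) : ℂ) := by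
    rw [Complex.mul_conj, hxdef, Complex.sq_norm]
  have hz2c : z₂ * (starRingEnd ℂ) z₂ = ((y^2 : ℝ) : ℂ) := by
    rw [Complex.mul_conj, hydef, Complex.sq_norm]
  have e1 : z₁ * (a * (starRingEnd ℂ) z₁) + z₂ * (b * (starRingEnd ℂ) z₂)
      = ((c*x + s*y : ℝ) : ℂ) := by
    rw [show z₁ * (a * (starRingEnd ℂ) z₁) = a * (z₁ * (starRingEnd ℂ) z₁) by ring,
      show z₂ * (b * (starRingEnd ℂ) z₂) = b * (z₂ * (starRingEnd ℂ) z₂) by ring,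
      hz1c, hz2c, hadef, hbdef]
    have hxc : (x:ℂ) ≠ 0 := Complex.ofReal_ne_zero.2 hx
    have hyc : (y:ℂ) ≠ 0 := Complex.ofReal_ne_zero.2 hy
    push_cast
    field_simp
  have e2 : ‖z₁ * (b * (starRingEnd ℂ) z₂)‖ = x * s := by
    rw [norm_mul, hnb, ← hxdef]
  rw [e1, e2, Complex.norm_real, Real.norm_eq_abs,
    abs_of_nonneg (by positivity)] at key
  -- now key : (c*x + s*y)^2 + (x*s)^2 ≤ 1
  have e3 : (c*x + s*y)^2 + (x*s)^2
      = c^2*x^2 + 2*(c*s)*(x*y) + s^2*y^2 + x^2*s^2 := by ring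
  rw [e3, hc2, hs2, hcs] at key
  have hdne : d ≠ 0 := ne_of_gt hd0
  have e4 : ((d-y)/(2*d)*x^2 + 2*(x/d)*(x*y) + (d+y)/(2*d)*y^2 + x^2*((d+y)/(2*d))) * (2*d)
      = 2*d*x^2 + 4*x^2*y + d*y^2 + y^3 := by
    field_simp
    ring
  have key2 : 2*d*x^2 + 4*x^2*y + d*y^2 + y^3 ≤ 2*d := by
    rw [← e4]
    calc ((d-y)/(2*d)*x^2 + 2*(x/d)*(x*y) + (d+y)/(2*d)*y^2 + x^2*((d+y)/(2*d))) * (2*d)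
        ≤ 1 * (2*d) := mul_le_mul_of_nonneg_right key (by linarith)
      _ = 2*d := one_mul _
  have h5 : y * d ≤ 2 - 2*x^2 - y^2 := by
    nlinarith [key2, hd2, hd0, mul_pos hyp hd0]
  have h6 : (y*d)^2 ≤ (2 - 2*x^2 - y^2)^2 := by
    have hyd0 : 0 ≤ y*d := mul_nonneg hy0 hd0.le
    nlinarith [h5, hyd0]
  have h7 : y^2 ≤ (1 - x^2)^2 := by nlinarith [h6, hd2]
  nlinarith [h7, hx1, hxp, hyp]

lemma norm_cond (z₁ z₂ : ℂ) :
    ‖z₁ • (!![(1 : ℂ), 0; 0, 1]) + z₂ • (!![(0 : ℂ), 1; 0, 0])‖ ≤ 1 ↔ ‖z₁‖^2 + ‖z₂‖ ≤ 1 := by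
  rw [show z₁ • (!![(1 : ℂ), 0; 0, 1]) + z₂ • (!![(0 : ℂ), 1; 0, 0])
      = !![z₁, z₂; 0, z₁] from by ext i j; fin_cases i <;> fin_cases j <;> simp]
  exact ⟨le_of_normM z₁ z₂, normM_le z₁ z₂⟩

/-- Explicit formula for the dual norm `‖·‖_A*` when `A₁ = I₂` and `A₂ = E₁₂`. -/

theorem dual_norm_formula
    (ω₁ ω₂ : ℂ) (h : ω₂ ≠ 0) :
    (‖ω₂‖ ≥ ‖ω₁‖ / 2 →
      sSup {r : ℝ | ∃ z₁ z₂ : ℂ,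
          ‖z₁ • (!![(1 : ℂ), 0; 0, 1]) + z₂ • (!![(0 : ℂ), 1; 0, 0])‖ ≤ 1 ∧
          r = ‖ω₁ * z₁ + ω₂ * z₂‖} =
        (‖ω₁‖ ^ 2 + 4 * ‖ω₂‖ ^ 2) / (4 * ‖ω₂‖)) ∧
    (‖ω₂‖ ≤ ‖ω₁‖ / 2 →
      sSup {r : ℝ | ∃ z₁ z₂ : ℂ,
          ‖z₁ • (!![(1 : ℂ), 0; 0, 1]) + z₂ • (!![(0 : ℂ), 1; 0, 0])‖ ≤ 1 ∧
          r = ‖ω₁ * z₁ + ω₂ * z₂‖} =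
        ‖ω₁‖) := by
  have hset : {r : ℝ | ∃ z₁ z₂ : ℂ,
      ‖z₁ • (!![(1 : ℂ), 0; 0, 1]) + z₂ • (!![(0 : ℂ), 1; 0, 0])‖ ≤ 1 ∧
      r = ‖ω₁ * z₁ + ω₂ * z₂‖} =
      {r : ℝ | ∃ z₁ z₂ : ℂ, ‖z₁‖^2 + ‖z₂‖ ≤ 1 ∧ r = ‖ω₁ * z₁ + ω₂ * z₂‖} := by
    ext r; simp only [Set.mem_setOf_eq, norm_cond]
  rw [hset]
  set a := ‖ω₁‖ with hadef
  set b := ‖ω₂‖ with hbdef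
  have ha0 : 0 ≤ a := norm_nonneg _
  have hb0 : 0 < b := norm_pos_iff.2 h
  have hsq1 : Complex.normSq ω₁ = a^2 := by
    rw [hadef, ← Complex.sq_norm]
  have hsq2 : Complex.normSq ω₂ = b^2 := by
    rw [hbdef, ← Complex.sq_norm]
  -- upper bound lemma
  have hub : ∀ r ∈ {r : ℝ | ∃ z₁ z₂ : ℂ, ‖z₁‖^2 + ‖z₂‖ ≤ 1 ∧ r = ‖ω₁ * z₁ + ω₂ * z₂‖},
      ∃ u v : ℝ, 0 ≤ u ∧ 0 ≤ v ∧ u^2 + v ≤ 1 ∧ r ≤ a * u + b * v := by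
    rintro r ⟨z₁, z₂, hz, rfl⟩
    refine ⟨‖z₁‖, ‖z₂‖, norm_nonneg _, norm_nonneg _, hz, ?_⟩
    calc ‖ω₁ * z₁ + ω₂ * z₂‖ ≤ ‖ω₁ * z₁‖ + ‖ω₂ * z₂‖ := norm_add_le _ _
      _ = a * ‖z₁‖ + b * ‖z₂‖ := by rw [norm_mul, norm_mul]
  constructor
  · intro hge
    apply IsGreatest.csSup_eq
    constructor
    · -- the maximizer
      refine ⟨(starRingEnd ℂ) ω₁ / ((2*b : ℝ) : ℂ),
        (((1 - a^2/(4*b^2))/b : ℝ) : ℂ) * (starRingEnd ℂ) ω₂, ?_, ?_⟩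
      · have h1 : ‖(starRingEnd ℂ) ω₁ / ((2*b : ℝ) : ℂ)‖ = a / (2*b) := by
          rw [norm_div, RCLike.norm_conj, Complex.norm_real, Real.norm_eq_abs,
            abs_of_nonneg (by positivity), ← hadef]
        have h2 : ‖(((1 - a^2/(4*b^2))/b : ℝ) : ℂ) * (starRingEnd ℂ) ω₂‖
            = 1 - a^2/(4*b^2) := by
          rw [norm_mul, RCLike.norm_conj, Complex.norm_real, Real.norm_eq_abs, ← hbdef,
            abs_of_nonneg (by
              apply div_nonneg _ hb0.le
              have : a^2 ≤ 4*b^2 := by nlinarith [hge]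
              rw [sub_nonneg]
              rw [div_le_one (by positivity)]
              exact this)]
          field_simp
        rw [h1, h2]
        rw [div_pow, mul_pow]
        have : a^2/(2^2*b^2) = a^2/(4*b^2) := by norm_num
        rw [this]
        linarith
      · have e1 : ω₁ * ((starRingEnd ℂ) ω₁ / ((2*b : ℝ) : ℂ)) = ((a^2/(2*b) : ℝ) : ℂ) := by
          rw [mul_div_assoc', Complex.mul_conj, hsq1]
          push_cast
          ring
        have e2 : ω₂ * ((((1 - a^2/(4*b^2))/b : ℝ) : ℂ) * (starRingEnd ℂ) ω₂)
            = (((1 - a^2/(4*b^2))*b : ℝ) : ℂ) := by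
          rw [show ω₂ * ((((1 - a^2/(4*b^2))/b : ℝ) : ℂ) * (starRingEnd ℂ) ω₂)
            = (((1 - a^2/(4*b^2))/b : ℝ) : ℂ) * (ω₂ * (starRingEnd ℂ) ω₂) by ring,
            Complex.mul_conj, hsq2]
          have hbne : (b:ℂ) ≠ 0 := Complex.ofReal_ne_zero.2 hb0.ne'
          push_cast
          field_simp
        rw [e1, e2, ← Complex.ofReal_add, Complex.norm_real, Real.norm_eq_abs,
          abs_of_nonneg (by
            have : a^2 ≤ 4*b^2 := by nlinarith [hge]
            have h4 : 0 ≤ 1 - a^2/(4*b^2) := by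
              rw [sub_nonneg, div_le_one (by positivity)]; exact this
            positivity)]
        field_simp
        ring
    · intro r hr
      obtain ⟨u, v, hu, hv, huv, hru⟩ := hub r hr
      have : a * u + b * v ≤ (a^2 + 4*b^2)/(4*b) := by
        rw [le_div_iff₀ (show (0:ℝ) < 4*b by positivity)]
        nlinarith [sq_nonneg (a - 2*b*u), hb0, hv, huv]
      linarith
  · intro hle
    have ha0' : 0 < a := by linarith
    apply IsGreatest.csSup_eq
    constructor
    · refine ⟨(starRingEnd ℂ) ω₁ / ((a : ℝ) : ℂ), 0, ?_, ?_⟩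
      · have h1 : ‖(starRingEnd ℂ) ω₁ / ((a : ℝ) : ℂ)‖ = 1 := by
          rw [norm_div, RCLike.norm_conj, Complex.norm_real, Real.norm_eq_abs,
            abs_of_nonneg ha0, ← hadef, div_self ha0'.ne']
        rw [h1, norm_zero]
        norm_num
      · have e1 : ω₁ * ((starRingEnd ℂ) ω₁ / ((a : ℝ) : ℂ)) = ((a : ℝ) : ℂ) := by
          rw [mul_div_assoc', Complex.mul_conj, hsq1]
          have hane : (a:ℂ) ≠ 0 := Complex.ofReal_ne_zero.2 ha0'.ne'
          push_cast
          field_simp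
        rw [mul_zero, add_zero, e1, Complex.norm_real, Real.norm_eq_abs, abs_of_nonneg ha0]
    · intro r hr
      obtain ⟨u, v, hu, hv, huv, hru⟩ := hub r hr
      have hu1 : u ≤ 1 := by nlinarith
      have : a * u + b * v ≤ a := by
        nlinarith [mul_nonneg (sub_nonneg.2 hu1)
          (show 0 ≤ a - b - b*u by nlinarith), hv, hb0]
      linarith
end

section
/- Let A₁ = [[1,0],[0,1]] and A₂ = [[0,1],[0,0]], with dual norm ‖(ω₁,ω₂)‖_A* = sup{|ω₁z₁+ω₂z₂| : ‖z₁A₁+z₂A₂‖_op ≤ 1} on ℂ². Then sup over (ω₁,ω₂) ∈ ℂ² with ‖(ω₁,ω₂)‖_A* ≤ 1 of √(|ω₁|²/2 + |ω₂|²) equals 1. (Equivalently: for every (ω₁,ω₂) with ‖(ω₁,ω₂)‖_A* ≤ 1 one has |ω₁|²/2 + |ω₂|² ≤ 1, and this bound is attained.) -/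
open Matrix
open scoped Matrix.Norms.L2Operator

lemma euclid_norm_fin2 (y : EuclideanSpace ℂ (Fin 2)) :
    ‖y‖ = Real.sqrt (‖y 0‖ ^ 2 + ‖y 1‖ ^ 2) := by
  rw [EuclideanSpace.norm_eq, Fin.sum_univ_two]

lemma opnorm_le_of_mulVec (M : Matrix (Fin 2) (Fin 2) ℂ) {C : ℝ} (hC : 0 ≤ C)
    (h : ∀ x : Fin 2 → ℂ, ‖(M *ᵥ x) 0‖ ^ 2 + ‖(M *ᵥ x) 1‖ ^ 2 ≤ C ^ 2 * (‖x 0‖ ^ 2 + ‖x 1‖ ^ 2)) :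
    ‖M‖ ≤ C := by
  rw [Matrix.l2_opNorm_def]
  apply ContinuousLinearMap.opNorm_le_bound _ hC
  intro x
  have hx : (LinearEquiv.trans Matrix.toEuclideanLin LinearMap.toContinuousLinearMap M) x
      = (WithLp.equiv 2 (Fin 2 → ℂ)).symm (M *ᵥ (WithLp.equiv 2 (Fin 2 → ℂ)) x) := rfl
  rw [hx, euclid_norm_fin2, euclid_norm_fin2]
  rw [← Real.sqrt_sq hC, ← Real.sqrt_mul (by positivity)]
  apply Real.sqrt_le_sqrt
  exact h ((WithLp.equiv 2 (Fin 2 → ℂ)) x)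

lemma entry_le_opnorm (M : Matrix (Fin 2) (Fin 2) ℂ) (i j : Fin 2) :
    ‖M i j‖ ≤ ‖M‖ := by
  have h := Matrix.l2_opNorm_mulVec M ((WithLp.equiv 2 (Fin 2 → ℂ)).symm (Pi.single j 1))
  have hnorm : ‖(WithLp.equiv 2 (Fin 2 → ℂ)).symm (Pi.single j (1:ℂ))‖ = 1 := by
    simpa using EuclideanSpace.norm_single (𝕜 := ℂ) j 1
  rw [hnorm, mul_one, euclid_norm_fin2] at h
  have hc : ∀ k : Fin 2,
      ((EuclideanSpace.equiv (Fin 2) ℂ).symm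
        (M *ᵥ ((WithLp.equiv 2 (Fin 2 → ℂ)).symm (Pi.single j 1)))) k = M k j := by
    intro k
    show (M *ᵥ (Pi.single j 1)) k = M k j
    simp [Matrix.mulVec_single]
  rw [hc 0, hc 1] at h
  refine le_trans ?_ h
  rw [show ‖M i j‖ = Real.sqrt (‖M i j‖ ^ 2) from (Real.sqrt_sq (norm_nonneg _)).symm]
  apply Real.sqrt_le_sqrt
  fin_cases i <;> simp <;> nlinarith [sq_nonneg ‖M 0 j‖, sq_nonneg ‖M 1 j‖]

lemma Mnorm_le_one (z₁ z₂ : ℂ) (h : ‖z₁‖ ^ 2 + ‖z₂‖ ≤ 1) :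
    ‖z₁ • (!![(1 : ℂ), 0; 0, 1]) + z₂ • (!![(0 : ℂ), 1; 0, 0])‖ ≤ 1 := by
  apply opnorm_le_of_mulVec _ zero_le_one
  intro x
  have h0 : (((z₁ • (!![(1 : ℂ), 0; 0, 1]) + z₂ • (!![(0 : ℂ), 1; 0, 0]))) *ᵥ x) 0
      = z₁ * x 0 + z₂ * x 1 := by
    simp [Matrix.mulVec, dotProduct, Fin.sum_univ_two]
  have h1 : (((z₁ • (!![(1 : ℂ), 0; 0, 1]) + z₂ • (!![(0 : ℂ), 1; 0, 0]))) *ᵥ x) 1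
      = z₁ * x 1 := by
    simp [Matrix.mulVec, dotProduct, Fin.sum_univ_two]
  rw [h0, h1, one_pow, one_mul]
  have hb : ‖z₁ * x 0 + z₂ * x 1‖ ≤ ‖z₁‖ * ‖x 0‖ + ‖z₂‖ * ‖x 1‖ := by
    refine le_trans (norm_add_le _ _) ?_
    rw [norm_mul, norm_mul]
  have hb2 : ‖z₁ * x 0 + z₂ * x 1‖ ^ 2 ≤ (‖z₁‖ * ‖x 0‖ + ‖z₂‖ * ‖x 1‖) ^ 2 := by
    have := norm_nonneg (z₁ * x 0 + z₂ * x 1)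
    nlinarith
  rw [norm_mul]
  set p := ‖z₁‖; set q := ‖z₂‖; set u := ‖x 0‖; set v := ‖x 1‖
  have hp : 0 ≤ p := norm_nonneg _
  have hq : 0 ≤ q := norm_nonneg _
  have hu : 0 ≤ u := norm_nonneg _
  have hv : 0 ≤ v := norm_nonneg _
  nlinarith [mul_nonneg hq (sq_nonneg (u - p * v)), sq_nonneg v, sq_nonneg u,
    mul_nonneg (mul_nonneg hq hq) (sq_nonneg v), mul_nonneg hq (sq_nonneg v),
    mul_nonneg (mul_nonneg hp hp) (sq_nonneg v)]

lemma exists_phase (ω : ℂ) : ∃ u : ℂ, ‖u‖ = 1 ∧ ω * u = (‖ω‖ : ℂ) := by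
  by_cases hω : ω = 0
  · exact ⟨1, by simp, by simp [hω]⟩
  · have hn : ‖ω‖ ≠ 0 := norm_ne_zero_iff.mpr hω
    refine ⟨(starRingEnd ℂ) ω / ‖ω‖, ?_, ?_⟩
    · rw [norm_div]
      simp [hω]
    · have h1 : ω * (starRingEnd ℂ) ω = ((‖ω‖ : ℝ) ^ 2 : ℂ) := by
        rw [Complex.mul_conj]
        norm_cast
        rw [Complex.normSq_eq_norm_sq]
      rw [mul_div_assoc', h1]
      rw [sq, mul_div_assoc, div_self (by exact_mod_cast hn), mul_one]

/-- For `A₁ = I₂`, `A₂ = E₁₂`: the supremum of `√(|ω₁|²/2 + |ω₂|²)` over the closed dual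
unit ball `‖(ω₁,ω₂)‖_A* ≤ 1` equals `1`, and the bound is attained. -/
theorem sup_over_dual_ball_eq_one :
    IsGreatest {r : ℝ | ∃ ω₁ ω₂ : ℂ,
        sSup {s : ℝ | ∃ z₁ z₂ : ℂ,
            ‖z₁ • (!![(1 : ℂ), 0; 0, 1]) + z₂ • (!![(0 : ℂ), 1; 0, 0])‖ ≤ 1 ∧
            s = ‖ω₁ * z₁ + ω₂ * z₂‖} ≤ 1 ∧
        r = Real.sqrt (‖ω₁‖ ^ 2 / 2 + ‖ω₂‖ ^ 2)} 1 := by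
  constructor
  · refine ⟨0, 1, ?_, by norm_num⟩
    apply Real.sSup_le _ zero_le_one
    rintro s ⟨z₁, z₂, hz, rfl⟩
    have he := entry_le_opnorm (z₁ • (!![(1 : ℂ), 0; 0, 1]) + z₂ • (!![(0 : ℂ), 1; 0, 0])) 0 1
    have hentry : (z₁ • (!![(1 : ℂ), 0; 0, 1]) + z₂ • (!![(0 : ℂ), 1; 0, 0])) 0 1 = z₂ := by
      simp
    rw [hentry] at he
    simp only [zero_mul, one_mul, zero_add]
    exact le_trans he hz
  · rintro r ⟨ω₁, ω₂, hsup, rfl⟩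
    have hkey : ∀ z₁ z₂ : ℂ, ‖z₁ • (!![(1 : ℂ), 0; 0, 1]) + z₂ • (!![(0 : ℂ), 1; 0, 0])‖ ≤ 1 →
        ‖ω₁ * z₁ + ω₂ * z₂‖ ≤ 1 := by
      intro z₁ z₂ hz
      have hmem : ‖ω₁ * z₁ + ω₂ * z₂‖ ∈ {s : ℝ | ∃ z₁ z₂ : ℂ,
          ‖z₁ • (!![(1 : ℂ), 0; 0, 1]) + z₂ • (!![(0 : ℂ), 1; 0, 0])‖ ≤ 1 ∧
          s = ‖ω₁ * z₁ + ω₂ * z₂‖} := ⟨z₁, z₂, hz, rfl⟩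
      refine le_trans (le_csSup ?_ hmem) hsup
      refine ⟨‖ω₁‖ + ‖ω₂‖, ?_⟩
      rintro s ⟨w₁, w₂, hw, rfl⟩
      have h1 : ‖w₁‖ ≤ 1 := by
        have he := entry_le_opnorm (w₁ • (!![(1 : ℂ), 0; 0, 1]) + w₂ • (!![(0 : ℂ), 1; 0, 0])) 0 0
        have hentry : (w₁ • (!![(1 : ℂ), 0; 0, 1]) + w₂ • (!![(0 : ℂ), 1; 0, 0])) 0 0 = w₁ := by
          simp
        rw [hentry] at he
        exact le_trans he hw
      have h2 : ‖w₂‖ ≤ 1 := by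
        have he := entry_le_opnorm (w₁ • (!![(1 : ℂ), 0; 0, 1]) + w₂ • (!![(0 : ℂ), 1; 0, 0])) 0 1
        have hentry : (w₁ • (!![(1 : ℂ), 0; 0, 1]) + w₂ • (!![(0 : ℂ), 1; 0, 0])) 0 1 = w₂ := by
          simp
        rw [hentry] at he
        exact le_trans he hw
      calc ‖ω₁ * w₁ + ω₂ * w₂‖ ≤ ‖ω₁‖ * ‖w₁‖ + ‖ω₂‖ * ‖w₂‖ := by
            refine le_trans (norm_add_le _ _) ?_
            rw [norm_mul, norm_mul]
        _ ≤ ‖ω₁‖ + ‖ω₂‖ := by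
            nlinarith [norm_nonneg ω₁, norm_nonneg ω₂, norm_nonneg w₁, norm_nonneg w₂]
    have key2 : ∀ t s : ℝ, 0 ≤ t → 0 ≤ s → t ^ 2 + s ≤ 1 → ‖ω₁‖ * t + ‖ω₂‖ * s ≤ 1 := by
      intro t s ht hs hts
      obtain ⟨u₁, hu₁, hω₁⟩ := exists_phase ω₁
      obtain ⟨u₂, hu₂, hω₂⟩ := exists_phase ω₂
      have hz : ‖(t : ℂ) * u₁‖ ^ 2 + ‖(s : ℂ) * u₂‖ ≤ 1 := by
        rw [norm_mul, norm_mul, hu₁, hu₂, mul_one, mul_one, Complex.norm_real, Complex.norm_real,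
          Real.norm_of_nonneg ht, Real.norm_of_nonneg hs]
        exact hts
      have hle := hkey ((t : ℂ) * u₁) ((s : ℂ) * u₂) (Mnorm_le_one _ _ hz)
      have heq : ω₁ * ((t : ℂ) * u₁) + ω₂ * ((s : ℂ) * u₂)
          = ((‖ω₁‖ * t + ‖ω₂‖ * s : ℝ) : ℂ) := by
        push_cast
        rw [show ω₁ * (↑t * u₁) = ↑t * (ω₁ * u₁) by ring,
          show ω₂ * (↑s * u₂) = ↑s * (ω₂ * u₂) by ring, hω₁, hω₂]
        ring
      rw [heq, Complex.norm_real, Real.norm_eq_abs] at hle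
      exact le_trans (le_abs_self _) hle
    set a := ‖ω₁‖ with ha_def
    set b := ‖ω₂‖ with hb_def
    have ha : 0 ≤ a := norm_nonneg _
    have hb0 : 0 ≤ b := norm_nonneg _
    have hq : a ^ 2 / 2 + b ^ 2 ≤ 1 := by
      have h1 : a ≤ 1 := by
        have := key2 1 0 zero_le_one le_rfl (by norm_num)
        linarith
      rcases le_or_gt b (a / 2) with hc | hc
      · nlinarith
      · have hbpos : 0 < b := by linarith
        have hbne : b ≠ 0 := ne_of_gt hbpos
        have htnn : (0:ℝ) ≤ a / (2 * b) := by positivity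
        have ht1 : a / (2 * b) ≤ 1 := by
          rw [div_le_one (by linarith)]
          linarith
        have hsnn : (0:ℝ) ≤ 1 - (a / (2 * b)) ^ 2 := by nlinarith
        have h2 := key2 (a / (2 * b)) (1 - (a / (2 * b)) ^ 2) htnn hsnn (le_of_eq (by ring))
        have h3 : a ^ 2 + 4 * b ^ 2 ≤ 4 * b := by
          have h2' : a * (a / (2 * b)) + b * (1 - (a / (2 * b)) ^ 2) ≤ 1 := h2
          field_simp at h2'
          nlinarith [h2', mul_pos hbpos hbpos]
        nlinarith [sq_nonneg (1 - b)]
    calc Real.sqrt (a ^ 2 / 2 + b ^ 2) ≤ Real.sqrt 1 := Real.sqrt_le_sqrt hq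
      _ = 1 := Real.sqrt_one
end
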